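/- Let M be a map and let E0 = {s1,s2} be a twisted edge of M whose edge-sides lie in a face F of size 2r. Then the faces of M \ E0 are obtained from the faces of M by replacing F by a face of size 2(r−1), all other faces of M being unchanged. -/

import Mathlib

open Equiv Polynomial

open scoped Classical

noncomputable section

variable {α : Type*}

/-- `f` is a *pairing* of the finite set `S`: an involution of the ambient type which
moves exactly the elements of `S` (i.e., a fixpoint-free involution of `S`, extended by
the identity outside of `S`); the pairs of the pairing are the orbits `{a, f a}`. -/
def IsPairing (S : Finset α) (f : Equiv.Perm α) : Prop :=
  (∀ a, f (f a) = a) ∧ ∀ a, f a ≠ a ↔ a ∈ S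

/-- The pairing `P_{{s₁,s₂}}` obtained from the pairing `f` by removing the elements
`s₁, s₂` : if `{s₁,s₂}` is a pair of `f` it is simply deleted; otherwise the pairs
containing `s₁` and `s₂` are deleted and the partners `f s₁`, `f s₂` are matched
together. -/
def removeP (f : Equiv.Perm α) (s₁ s₂ : α) : Equiv.Perm α :=
  Equiv.swap s₁ s₂ * Equiv.swap s₁ (f s₂) * Equiv.swap s₂ (f s₁) * f

/-- `t` lies in the polygon of `L(b,w)` containing `s`, in *even position* with
respect to `s`: `t` is obtained from `s` by an odd alternating word in the
involutions `b` and `w`. -/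
def EvenPos (b w : Equiv.Perm α) (s t : α) : Prop :=
  ∃ j : ℤ, t = ((w * b) ^ j * b) s

/-- `t` lies in the polygon of `L(b,w)` containing `s`, in *odd position* with respect
to `s`: `t` is obtained from `s` by an even alternating word in the involutions
`b` and `w`. -/
def OddPos (b w : Equiv.Perm α) (s t : α) : Prop :=
  ∃ j : ℤ, t = ((w * b) ^ j) s

/-- `s` and `t` lie in the same polygon of `L(b,w)`. -/
def SameFace (b w : Equiv.Perm α) (s t : α) : Prop :=
  EvenPos b w s t ∨ OddPos b w s t

/-- The edge `{s,t}` is *straight*: both edge-sides lie in the same face,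
in even position. -/
def IsStraight (b w : Equiv.Perm α) (s t : α) : Prop :=
  SameFace b w s t ∧ EvenPos b w s t

/-- The edge `{s,t}` is *twisted*: both edge-sides lie in the same face,
in odd position. -/
def IsTwisted (b w : Equiv.Perm α) (s t : α) : Prop :=
  SameFace b w s t ∧ OddPos b w s t

/-- The edge `{s,t}` is an *interface* edge: its edge-sides lie in two
different faces. -/
def IsInterface (b w : Equiv.Perm α) (s t : α) : Prop :=
  ¬ SameFace b w s t

/-- The polygon (face) of `L(b,w)` containing `s`, as the set of its edge-sides. -/
def faceOf (S : Finset α) (b w : Equiv.Perm α) (s : α) : Finset α :=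
  S.filter (SameFace b w s)

/-- The collection of polygons (faces) of `L(b,w)`. -/
def faces (S : Finset α) (b w : Equiv.Perm α) : Finset (Finset α) :=
  S.image (faceOf S b w)

/-- The number of polygons (faces) of `L(b,w)`. -/
def numFaces (S : Finset α) (b w : Equiv.Perm α) : ℕ :=
  (faces S b w).card

/-- The *type* of the couple of pairings `(b,w)`: the multiset of half-lengths of the
polygons of `L(b,w)`. -/
def faceType (S : Finset α) (b w : Equiv.Perm α) : Multiset ℕ :=
  (faces S b w).val.map fun F => F.card / 2

/-- `s` and `t` lie in the same connected component of the map `(b,w,e)`: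
`t` is obtained from `s` by applying partner maps in `b`, `w`, `e` repeatedly. -/
def SameComponent (b w e : Equiv.Perm α) (s t : α) : Prop :=
  ∃ g ∈ Subgroup.closure ({b, w, e} : Set (Equiv.Perm α)), g s = t

/-- The number of connected components of the map `(S, b, w, e)`. -/
def numComponents (S : Finset α) (b w e : Equiv.Perm α) : ℕ :=
  (S.image fun s => S.filter (SameComponent b w e s)).card

/-- The number of vertices of the map `(S, b, w, e)`: black vertices are the polygons
of `L(b,e)`, white vertices are the polygons of `L(w,e)`. -/
def numVertices (S : Finset α) (b w e : Equiv.Perm α) : ℕ :=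
  numFaces S b e + numFaces S w e

/-- The number of edges of a map with edge-side set `S`. -/
def numEdges (S : Finset α) : ℕ := S.card / 2

/-- The Euler characteristic `χ(M) = |V(M)| - |E(M)| + |F(M)|` of the map
`M = (S, b, w, e)`. -/
def eulerChar (S : Finset α) (b w e : Equiv.Perm α) : ℤ :=
  (numVertices S b w e : ℤ) - (numEdges S : ℤ) + (numFaces S b w : ℤ)

/-- The quantity `d(M) = 2·(number of connected components of M) - χ(M)`. -/
def dInv (S : Finset α) (b w e : Equiv.Perm α) : ℤ :=
  2 * (numComponents S b w e : ℤ) - eulerChar S b w e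

/-- The edge `{s, e s}` of the map `(b, w, e)` is a *bridge*: either one of its
extremities is a leaf (the pair belongs to `b` or to `w` as well), or its two
extremities lie in different connected components of the map with this edge removed. -/
def IsBridge (b w e : Equiv.Perm α) (s : α) : Prop :=
  (b s = e s ∨ w s = e s) ∨
    ¬ SameComponent (removeP b s (e s)) (removeP w s (e s)) (removeP e s (e s))
        (b s) (w s)

/-- The weight of the edge `{s,t}` in the map with face structure given by `(b,w)`,
as a polynomial in the variable `γ` (over `ℚ`): `1` for a straight edge, `γ` for a
twisted edge, `1/2` for an interface edge. -/
def edgeWeight (b w : Equiv.Perm α) (s t : α) : Polynomial ℚ :=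
  if IsStraight b w s t then 1
  else if IsTwisted b w s t then Polynomial.X
  else Polynomial.C (1 / 2)

/-- The weight `w_{M,≺}` of a map `(b,w,e)` equipped with a history, the latter
encoded as the list of the edges in increasing order (each edge represented by one
of its edge-sides): the product of the weights of the edges, each weight being
computed in the map in which all previous edges have already been removed. -/
def histWeight : Equiv.Perm α → Equiv.Perm α → Equiv.Perm α → List α → Polynomial ℚ
  | _, _, _, [] => 1
  | b, w, e, s :: L =>
      edgeWeight b w s (e s) *
        histWeight (removeP b s (e s)) (removeP w s (e s)) (removeP e s (e s)) L

/-- `L` encodes a *history* (a linear order on the edges) of the map with edge-side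
set `S` and edge pairing `e`: it lists every edge exactly once, each edge being
represented by its smaller edge-side. -/
def IsHistory [LinearOrder α] (S : Finset α) (e : Equiv.Perm α) (L : List α) : Prop :=
  L.Nodup ∧ (∀ s ∈ L, s ∈ S ∧ s < e s) ∧ ∀ a ∈ S, a ∈ L ∨ e a ∈ L

/-- The *measure of non-orientability* `w_M` of the map `(S,b,w,e)`: the average of
`w_{M,≺}` over all `n!` histories `≺`, as a polynomial in the variable `γ` over `ℚ`. -/
def mapWeight [LinearOrder α] (S : Finset α) (b w e : Equiv.Perm α) : Polynomial ℚ :=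
  Polynomial.C (1 / ((numEdges S).factorial : ℚ)) *
    ∑ F ∈ (Fintype.piFinset fun _ : Fin (numEdges S) => S).filter
        (fun F => IsHistory S e (List.ofFn F)),
      histWeight b w e (List.ofFn F)

/-- The number of embeddings `N_M(λ)` of the underlying bipartite graph of the map
`(S,b,w,e)` into the Young diagram whose list of row lengths is `lam`: an embedding
maps black vertices (polygons of `L(b,e)`) to rows, white vertices (polygons of
`L(w,e)`) to columns, and each edge to the box at the corresponding intersection;
it is encoded by a pair of functions on edge-sides that are constant on vertices. -/
def NMap (lam : List ℕ) (S : Finset α) (b w e : Equiv.Perm α) : ℕ :=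
  Nat.card {fp : (α → ℕ) × (α → ℕ) //
    (∀ s, s ∉ S → fp.1 s = 0 ∧ fp.2 s = 0) ∧
    (∀ s ∈ S, fp.1 (b s) = fp.1 s ∧ fp.1 (e s) = fp.1 s) ∧
    (∀ s ∈ S, fp.2 (w s) = fp.2 s ∧ fp.2 (e s) = fp.2 s) ∧
    ∀ s ∈ S, fp.2 s < lam.getD (fp.1 s) 0}

/-- The orientability generating series `\widehat{Ch}^{(α)}_π(λ)`, where the face-type
`π` is realized by the fixed couple of pairings `(b,w)` of `S`, `lam` is the list of
row lengths of the Young diagram `λ`, and `a` is the Jack parameter `α`: the sum over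
all pairings `e` of `S` (i.e., over all maps of face-type `π`) of
`(-1/√α)^{|V_•(M)|} (√α)^{|V_∘(M)|} w_M N_M(λ)`, times the sign `(-1)^{ℓ(π)}`,
where `w_M` is evaluated at `γ = (1-α)/√α`. -/
def genSeries [Fintype α] [LinearOrder α] (lam : List ℕ) (S : Finset α)
    (b w : Equiv.Perm α) (a : ℝ) : ℝ :=
  (-1 : ℝ) ^ numFaces S b w *
    ∑ e ∈ Finset.univ.filter fun e : Equiv.Perm α => IsPairing S e,
      (-1 / Real.sqrt a) ^ numFaces S b e * (Real.sqrt a) ^ numFaces S w e *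
        Polynomial.aeval ((1 - a) / Real.sqrt a) (mapWeight S b w e) *
          (NMap lam S b w e : ℝ)

/-- The number of embeddings `N_G(λ)` of the bipartite graph `G` with black vertex set
`ι`, white vertex set `κ` and edge relation `Edg` into the Young diagram whose list of
row lengths is `lam`: black vertices are mapped to rows of `λ`, white vertices to
columns of `λ`, and every edge to the box at the corresponding intersection, which
must belong to `λ`. -/
def NGraph {ι κ : Type*} (lam : List ℕ) (Edg : ι → κ → Prop) : ℕ :=
  Nat.card {fp : (ι → ℕ) × (κ → ℕ) //
    (∀ u, 0 < lam.getD (fp.1 u) 0) ∧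
    (∀ v, ∃ i, fp.2 v < lam.getD i 0) ∧
    ∀ u v, Edg u v → fp.2 v < lam.getD (fp.1 u) 0}

/-! ### Auxiliary lemmas for `faces_remove_twisted_edge` -/

section AuxFRTE

private lemma FR_inv_self {f : Equiv.Perm α} (hf : ∀ a, f (f a) = a) : f⁻¹ = f :=
  inv_eq_of_mul_eq_one_right (Equiv.ext hf)

private lemma FR_pairing_ne {S : Finset α} {f : Equiv.Perm α} (hf : IsPairing S f)
    {a : α} (ha : a ∈ S) : f a ≠ a := (hf.2 a).2 ha

private lemma FR_pairing_mem {S : Finset α} {f : Equiv.Perm α} (hf : IsPairing S f)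
    {a : α} (ha : a ∈ S) : f a ∈ S := by
  rw [← hf.2]
  intro h
  exact (hf.2 a).2 ha (h.symm.trans (hf.1 a))

private lemma FR_zpow_succ_apply (g : Equiv.Perm α) (n : ℤ) (s : α) :
    (g ^ (n + 1)) s = g ((g ^ n) s) := by
  rw [add_comm, zpow_one_add, Equiv.Perm.mul_apply]

private lemma FR_zpow_pred_apply (g : Equiv.Perm α) (n : ℤ) (s : α) :
    (g ^ (n - 1)) s = g⁻¹ ((g ^ n) s) := by
  rw [sub_eq_add_neg, add_comm, zpow_add, zpow_neg_one, Equiv.Perm.mul_apply]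

private lemma FR_zpow_apply_zpow (g : Equiv.Perm α) (i j : ℤ) (s : α) :
    (g ^ i) ((g ^ j) s) = (g ^ (i + j)) s := by
  rw [← Equiv.Perm.mul_apply, ← zpow_add]

private lemma FR_zpow_fix {g : Equiv.Perm α} {s : α} (h : g s = s) :
    ∀ k : ℤ, (g ^ k) s = s := by
  intro k
  induction k using Int.induction_on with
  | zero => simp
  | succ n ih => rw [FR_zpow_succ_apply, ih, h]
  | pred n ih =>
      have h' : g⁻¹ s = s := by
        apply g.injective
        rw [← Equiv.Perm.mul_apply, mul_inv_cancel, Equiv.Perm.one_apply, h]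
      rw [FR_zpow_pred_apply, ih, h']

private lemma FR_conj_zpow {b w : Equiv.Perm α} (hb : ∀ a, b (b a) = a)
    (hw : ∀ a, w (w a) = a) (j : ℤ) :
    b * (w * b) ^ j = (w * b) ^ (-j) * b := by
  have hbb : b * b = 1 := Equiv.ext hb
  have hconj : b * (w * b) * b⁻¹ = (w * b)⁻¹ := by
    rw [FR_inv_self hb, mul_inv_rev, FR_inv_self hb, FR_inv_self hw]
    rw [mul_assoc, mul_assoc, hbb, mul_one]
  have h1 : b * (w * b) ^ j * b⁻¹ = ((w * b)⁻¹) ^ j := by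
    have h2 := map_zpow (MulAut.conj b) (w * b) j
    simp only [MulAut.conj_apply] at h2
    rw [h2, hconj]
  have h3 : b * (w * b) ^ j = ((w * b)⁻¹) ^ j * b := by
    rw [← h1, inv_mul_cancel_right]
  rw [h3, inv_zpow, ← zpow_neg]

private lemma FR_conj_apply {b w : Equiv.Perm α} (hb : ∀ a, b (b a) = a)
    (hw : ∀ a, w (w a) = a) (j : ℤ) (t : α) :
    b (((w * b) ^ j) t) = ((w * b) ^ (-j)) (b t) := by
  have := congrFun (congrArg (fun p : Equiv.Perm α => (p : α → α)) (FR_conj_zpow hb hw j)) t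
  simpa [Equiv.Perm.mul_apply] using this

private lemma FR_w_conj_apply {b w : Equiv.Perm α} (hb : ∀ a, b (b a) = a)
    (hw : ∀ a, w (w a) = a) (j : ℤ) (t : α) :
    w (((w * b) ^ j) t) = ((w * b) ^ (1 - j)) (b t) := by
  have h1 : w (((w * b) ^ j) t) = (w * b) (b (((w * b) ^ j) t)) := by
    rw [Equiv.Perm.mul_apply, hb]
  rw [h1, FR_conj_apply hb hw]
  have h2 : (w * b) (((w * b) ^ (-j)) (b t)) = ((w * b) ^ (1 : ℤ)) (((w * b) ^ (-j)) (b t)) := by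
    rw [zpow_one]
  rw [h2, FR_zpow_apply_zpow, sub_eq_add_neg]

private lemma FR_evenPos_iff {b w : Equiv.Perm α} {s t : α} :
    EvenPos b w s t ↔ ∃ j : ℤ, t = ((w * b) ^ j) (b s) := by
  unfold EvenPos
  simp only [Equiv.Perm.mul_apply]

private lemma FR_sameFace_refl (b w : Equiv.Perm α) (s : α) : SameFace b w s s :=
  Or.inr ⟨0, by simp⟩

private lemma FR_sameFace_apply_b (b w : Equiv.Perm α) (t : α) :
    SameFace b w t (b t) :=
  Or.inl ⟨0, by simp⟩

private lemma FR_sameFace_apply_w {b w : Equiv.Perm α} (hb : ∀ a, b (b a) = a) (t : α) :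
    SameFace b w t (w t) :=
  Or.inl ⟨1, by rw [zpow_one, Equiv.Perm.mul_apply, Equiv.Perm.mul_apply, hb]⟩

private lemma FR_sameFace_symm {b w : Equiv.Perm α} (hb : ∀ a, b (b a) = a)
    (hw : ∀ a, w (w a) = a) {s t : α} (h : SameFace b w s t) : SameFace b w t s := by
  rcases h with ⟨j, hj⟩ | ⟨j, hj⟩
  · rw [Equiv.Perm.mul_apply] at hj
    left
    rw [FR_evenPos_iff]
    refine ⟨j, ?_⟩
    have hbt : b t = ((w * b) ^ (-j)) s := by
      rw [hj, FR_conj_apply hb hw, hb]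
    rw [hbt, FR_zpow_apply_zpow]
    simp
  · right
    refine ⟨-j, ?_⟩
    rw [hj, FR_zpow_apply_zpow]
    simp

private lemma FR_sameFace_trans {b w : Equiv.Perm α} (hb : ∀ a, b (b a) = a)
    (hw : ∀ a, w (w a) = a) {s t u : α} (h1 : SameFace b w s t)
    (h2 : SameFace b w t u) : SameFace b w s u := by
  rcases h1 with ⟨j, hj⟩ | ⟨j, hj⟩ <;> rcases h2 with ⟨k, hk⟩ | ⟨k, hk⟩
  · -- t = (wb)^j (b s), u = (wb)^k (b t)
    simp only [Equiv.Perm.mul_apply] at hj hk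
    right
    refine ⟨k - j, ?_⟩
    have hbt : b t = ((w * b) ^ (-j)) s := by rw [hj, FR_conj_apply hb hw, hb]
    rw [hk, hbt, FR_zpow_apply_zpow, sub_eq_add_neg]
  · -- t = (wb)^j (b s), u = (wb)^k t
    simp only [Equiv.Perm.mul_apply] at hj
    left
    rw [FR_evenPos_iff]
    refine ⟨k + j, ?_⟩
    rw [hk, hj, FR_zpow_apply_zpow]
  · -- t = (wb)^j s, u = (wb)^k (b t)
    simp only [Equiv.Perm.mul_apply] at hk
    left
    rw [FR_evenPos_iff]
    refine ⟨k - j, ?_⟩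
    have hbt : b t = ((w * b) ^ (-j)) (b s) := by rw [hj, FR_conj_apply hb hw]
    rw [hk, hbt, FR_zpow_apply_zpow, sub_eq_add_neg]
  · right
    refine ⟨k + j, ?_⟩
    rw [hk, hj, FR_zpow_apply_zpow]

private lemma FR_agree_orbit {b w b' w' : Equiv.Perm α}
    (hb : ∀ a, b (b a) = a) (hw : ∀ a, w (w a) = a)
    (hb' : ∀ a, b' (b' a) = a) (hw' : ∀ a, w' (w' a) = a)
    (A : α → Prop) (hAb : ∀ x, A x → A (b x)) (hAw : ∀ x, A x → A (w x))
    (heqb : ∀ x, A x → b' x = b x) (heqw : ∀ x, A x → w' x = w x)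
    {s : α} (hs : A s) (j : ℤ) :
    ((w' * b') ^ j) s = ((w * b) ^ j) s ∧ A (((w * b) ^ j) s) := by
  induction j using Int.induction_on with
  | zero => exact ⟨by simp, by simpa using hs⟩
  | succ n ih =>
      obtain ⟨ihe, ihA⟩ := ih
      have h1 : ((w' * b') ^ ((n : ℤ) + 1)) s = w' (b' (((w' * b') ^ (n : ℤ)) s)) := by
        rw [FR_zpow_succ_apply, Equiv.Perm.mul_apply]
      have h2 : ((w * b) ^ ((n : ℤ) + 1)) s = w (b (((w * b) ^ (n : ℤ)) s)) := by
        rw [FR_zpow_succ_apply, Equiv.Perm.mul_apply]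
      constructor
      · rw [h1, h2, ihe, heqb _ ihA, heqw _ (hAb _ ihA)]
      · rw [h2]; exact hAw _ (hAb _ ihA)
  | pred n ih =>
      obtain ⟨ihe, ihA⟩ := ih
      have hinv : (w' * b')⁻¹ = b' * w' := by
        rw [mul_inv_rev, FR_inv_self hb', FR_inv_self hw']
      have hinv2 : (w * b)⁻¹ = b * w := by
        rw [mul_inv_rev, FR_inv_self hb, FR_inv_self hw]
      have h1 : ((w' * b') ^ (-(n : ℤ) - 1)) s = b' (w' (((w' * b') ^ (-(n : ℤ))) s)) := by
        rw [FR_zpow_pred_apply, hinv, Equiv.Perm.mul_apply]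
      have h2 : ((w * b) ^ (-(n : ℤ) - 1)) s = b (w (((w * b) ^ (-(n : ℤ))) s)) := by
        rw [FR_zpow_pred_apply, hinv2, Equiv.Perm.mul_apply]
      constructor
      · rw [h1, h2, ihe, heqw _ ihA, heqb _ (hAw _ ihA)]
      · rw [h2]; exact hAb _ (hAw _ ihA)

private lemma FR_orbit_closure {b w : Equiv.Perm α}
    (hb : ∀ a, b (b a) = a) (hw : ∀ a, w (w a) = a)
    (P : α → Prop) (hPb : ∀ x, P x → P (b x)) (hPw : ∀ x, P x → P (w x))
    {s : α} (hs : P s) (j : ℤ) : P (((w * b) ^ j) s) :=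
  (FR_agree_orbit hb hw hb hw P hPb hPw (fun _ _ => rfl) (fun _ _ => rfl) hs j).2

private lemma FR_sameFace_closure {b w : Equiv.Perm α}
    (hb : ∀ a, b (b a) = a) (hw : ∀ a, w (w a) = a)
    (P : α → Prop) (hPb : ∀ x, P x → P (b x)) (hPw : ∀ x, P x → P (w x))
    {s t : α} (hs : P s) (h : SameFace b w s t) : P t := by
  rcases h with h | h
  · rw [FR_evenPos_iff] at h
    obtain ⟨j, rfl⟩ := h
    exact FR_orbit_closure hb hw P hPb hPw (hPb _ hs) j
  · obtain ⟨j, rfl⟩ := h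
    exact FR_orbit_closure hb hw P hPb hPw hs j

private lemma FR_sameFace_agree {b w b' w' : Equiv.Perm α}
    (hb : ∀ a, b (b a) = a) (hw : ∀ a, w (w a) = a)
    (hb' : ∀ a, b' (b' a) = a) (hw' : ∀ a, w' (w' a) = a)
    (A : α → Prop) (hAb : ∀ x, A x → A (b x)) (hAw : ∀ x, A x → A (w x))
    (heqb : ∀ x, A x → b' x = b x) (heqw : ∀ x, A x → w' x = w x)
    {s : α} (hs : A s) (t : α) : SameFace b' w' s t ↔ SameFace b w s t := by
  have hkey : ∀ j : ℤ, ((w' * b') ^ j) s = ((w * b) ^ j) s :=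
    fun j => (FR_agree_orbit hb hw hb' hw' A hAb hAw heqb heqw hs j).1
  have hkeyb : ∀ j : ℤ, ((w' * b') ^ j) (b' s) = ((w * b) ^ j) (b s) := by
    intro j
    rw [heqb _ hs]
    exact (FR_agree_orbit hb hw hb' hw' A hAb hAw heqb heqw (hAb _ hs) j).1
  constructor
  · rintro (⟨j, rfl⟩ | ⟨j, rfl⟩)
    · left
      rw [FR_evenPos_iff]
      refine ⟨j, ?_⟩
      rw [Equiv.Perm.mul_apply, hkeyb j]
    · right; exact ⟨j, hkey j⟩
  · rintro (⟨j, rfl⟩ | ⟨j, rfl⟩)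
    · left
      rw [FR_evenPos_iff]
      refine ⟨j, ?_⟩
      rw [Equiv.Perm.mul_apply, ← hkeyb j]
    · right; exact ⟨j, (hkey j).symm⟩

private lemma FR_dvd_small {d : ℕ} {z : ℤ} (hz : (d : ℤ) ∣ z) (h1 : -(d : ℤ) < z)
    (h2 : z < d) : z = 0 := by
  by_contra h0
  have habs : (d : ℤ) ≤ |z| := Int.le_of_dvd (abs_pos.mpr h0) ((dvd_abs _ _).mpr hz)
  rcases abs_cases z with ⟨he, _⟩ | ⟨he, _⟩ <;> omega

private lemma FR_removeP_apply {f : Equiv.Perm α} {s₁ s₂ : α}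
    (hf : ∀ a, f (f a) = a) (h1 : f s₁ ≠ s₁) (h2 : f s₂ ≠ s₂)
    (h12 : s₁ ≠ s₂) (hnd : f s₁ ≠ s₂) (t : α) :
    removeP f s₁ s₂ t =
      if t = s₁ then s₁ else if t = s₂ then s₂ else
      if t = f s₁ then f s₂ else if t = f s₂ then f s₁ else f t := by
  have hinj : ∀ x y : α, f x = f y → x = y := fun x y h => by rw [← hf x, h, hf]
  have hnd' : f s₂ ≠ s₁ := fun h => hnd (by rw [← h, hf])
  have h12' : f s₁ ≠ f s₂ := fun h => h12 (hinj _ _ h)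
  have goal_eq : removeP f s₁ s₂ t =
      (Equiv.swap s₁ s₂) ((Equiv.swap s₁ (f s₂)) ((Equiv.swap s₂ (f s₁)) (f t))) := rfl
  rw [goal_eq]
  by_cases e1 : t = s₁
  · rw [e1, if_pos rfl]
    have r1 : Equiv.swap s₂ (f s₁) (f s₁) = s₂ := Equiv.swap_apply_right _ _
    have r2 : Equiv.swap s₁ (f s₂) s₂ = s₂ :=
      Equiv.swap_apply_of_ne_of_ne (Ne.symm h12) (Ne.symm h2)
    have r3 : Equiv.swap s₁ s₂ s₂ = s₁ := Equiv.swap_apply_right _ _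
    rw [r1, r2, r3]
  rw [if_neg e1]
  by_cases e2 : t = s₂
  · rw [e2, if_pos rfl]
    have r1 : Equiv.swap s₂ (f s₁) (f s₂) = f s₂ :=
      Equiv.swap_apply_of_ne_of_ne h2 (Ne.symm h12')
    have r2 : Equiv.swap s₁ (f s₂) (f s₂) = s₁ := Equiv.swap_apply_right _ _
    have r3 : Equiv.swap s₁ s₂ s₁ = s₂ := Equiv.swap_apply_left _ _
    rw [r1, r2, r3]
  rw [if_neg e2]
  by_cases e3 : t = f s₁
  · rw [e3, if_pos rfl, hf]
    have r1 : Equiv.swap s₂ (f s₁) s₁ = s₁ :=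
      Equiv.swap_apply_of_ne_of_ne h12 (Ne.symm h1)
    have r2 : Equiv.swap s₁ (f s₂) s₁ = f s₂ := Equiv.swap_apply_left _ _
    have r3 : Equiv.swap s₁ s₂ (f s₂) = f s₂ :=
      Equiv.swap_apply_of_ne_of_ne hnd' h2
    rw [r1, r2, r3]
  rw [if_neg e3]
  by_cases e4 : t = f s₂
  · rw [e4, if_pos rfl, hf]
    have r1 : Equiv.swap s₂ (f s₁) s₂ = f s₁ := Equiv.swap_apply_left _ _
    have r2 : Equiv.swap s₁ (f s₂) (f s₁) = f s₁ :=
      Equiv.swap_apply_of_ne_of_ne h1 h12'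
    have r3 : Equiv.swap s₁ s₂ (f s₁) = f s₁ :=
      Equiv.swap_apply_of_ne_of_ne h1 hnd
    rw [r1, r2, r3]
  rw [if_neg e4]
  have k1 : f t ≠ s₁ := fun h => e3 (by rw [← hf t, h])
  have k2 : f t ≠ s₂ := fun h => e4 (by rw [← hf t, h])
  have k3 : f t ≠ f s₁ := fun h => e1 (hinj _ _ h)
  have k4 : f t ≠ f s₂ := fun h => e2 (hinj _ _ h)
  have r1 : Equiv.swap s₂ (f s₁) (f t) = f t := Equiv.swap_apply_of_ne_of_ne k2 k3
  have r2 : Equiv.swap s₁ (f s₂) (f t) = f t := Equiv.swap_apply_of_ne_of_ne k1 k4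
  have r3 : Equiv.swap s₁ s₂ (f t) = f t := Equiv.swap_apply_of_ne_of_ne k1 k2
  rw [r1, r2, r3]

private lemma FR_removeP_invol {f : Equiv.Perm α} {s₁ s₂ : α}
    (hf : ∀ a, f (f a) = a) (h1 : f s₁ ≠ s₁) (h2 : f s₂ ≠ s₂)
    (h12 : s₁ ≠ s₂) (hnd : f s₁ ≠ s₂) (t : α) :
    removeP f s₁ s₂ (removeP f s₁ s₂ t) = t := by
  have hinj : ∀ x y : α, f x = f y → x = y := fun x y h => by rw [← hf x, h, hf]
  have hnd' : f s₂ ≠ s₁ := fun h => hnd (by rw [← h, hf])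
  have h12' : f s₁ ≠ f s₂ := fun h => h12 (hinj _ _ h)
  have ha := FR_removeP_apply hf h1 h2 h12 hnd
  have hv1 : removeP f s₁ s₂ s₁ = s₁ := by rw [ha, if_pos rfl]
  have hv2 : removeP f s₁ s₂ s₂ = s₂ := by
    rw [ha, if_neg (Ne.symm h12), if_pos rfl]
  have hv3 : removeP f s₁ s₂ (f s₁) = f s₂ := by
    rw [ha, if_neg h1, if_neg hnd, if_pos rfl]
  have hv4 : removeP f s₁ s₂ (f s₂) = f s₁ := by
    rw [ha, if_neg hnd', if_neg h2, if_neg (Ne.symm h12'), if_pos rfl]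
  by_cases e1 : t = s₁
  · rw [e1, hv1, hv1]
  by_cases e2 : t = s₂
  · rw [e2, hv2, hv2]
  by_cases e3 : t = f s₁
  · rw [e3, hv3, hv4]
  by_cases e4 : t = f s₂
  · rw [e4, hv4, hv3]
  have k1 : f t ≠ s₁ := fun h => e3 (by rw [← hf t, h])
  have k2 : f t ≠ s₂ := fun h => e4 (by rw [← hf t, h])
  have k3 : f t ≠ f s₁ := fun h => e1 (hinj _ _ h)
  have k4 : f t ≠ f s₂ := fun h => e2 (hinj _ _ h)
  have hvt : removeP f s₁ s₂ t = f t := by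
    rw [ha, if_neg e1, if_neg e2, if_neg e3, if_neg e4]
  have hvft : removeP f s₁ s₂ (f t) = f (f t) := by
    rw [ha, if_neg k1, if_neg k2, if_neg k3, if_neg k4]
  rw [hvt, hvft, hf]

end AuxFRTE


/-- twisted edge removal: let `E₀ = {s₁, s₂}` (with `s₂ = e s₁`)
be a twisted edge of the map `M = (S,b,w,e)`, whose edge-sides lie in the face `F`
of size `2r`. Then the faces of `M \ E₀` are obtained from those of `M` by
replacing `F` by a face of size `2(r-1)` (consisting of the remaining edge-sides
of `F`), all other faces being unchanged. -/
theorem faces_remove_twisted_edge (S : Finset α) (b w e : Equiv.Perm α)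
    (hb : IsPairing S b) (hw : IsPairing S w) (he : IsPairing S e)
    (s₁ s₂ : α) (hs₁ : s₁ ∈ S) (hedge : e s₁ = s₂)
    (htwisted : IsTwisted b w s₁ s₂)
    (r : ℕ) (hsize : (faceOf S b w s₁).card = 2 * r) :
    (faceOf S b w s₁ \ {s₁, s₂}).card = 2 * (r - 1) ∧
    faces (S \ {s₁, s₂}) (removeP b s₁ s₂) (removeP w s₁ s₂)
      = (faces S b w).erase (faceOf S b w s₁) ∪ {faceOf S b w s₁ \ {s₁, s₂}} := by
  classical
  -- basic facts about s₂
  have hs₂ : s₂ ∈ S := by rw [← hedge]; exact FR_pairing_mem he hs₁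
  have hne : s₁ ≠ s₂ := by rw [← hedge]; exact Ne.symm (FR_pairing_ne he hs₁)
  obtain ⟨j₀, hj₀⟩ := htwisted.2
  -- membership closure under the orbit
  have hmemSz : ∀ (j : ℤ) {a : α}, a ∈ S → ((w * b) ^ j) a ∈ S := by
    intro j a ha
    exact FR_orbit_closure hb.1 hw.1 (· ∈ S) (fun x hx => FR_pairing_mem hb hx)
      (fun x hx => FR_pairing_mem hw hx) ha j
  -- the no-fold lemma
  have hnf : ∀ i j : ℤ, ((w * b) ^ i) s₁ ≠ b (((w * b) ^ j) s₁) := by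
    intro i j h
    have h3 : ((w * b) ^ j) (((w * b) ^ i) s₁) =
        ((w * b) ^ j) (((w * b) ^ (-j)) (b s₁)) := by
      rw [h, FR_conj_apply hb.1 hw.1]
    rw [FR_zpow_apply_zpow, FR_zpow_apply_zpow] at h3
    have h4 : ((w * b) ^ (j + -j)) (b s₁) = b s₁ := by
      rw [show j + -j = 0 by ring, zpow_zero, Equiv.Perm.one_apply]
    rw [h4] at h3
    -- h3 : (w*b)^(j+i) s₁ = b s₁
    rcases Int.even_or_odd (j + i) with ⟨l, hl⟩ | ⟨l, hl⟩
    · have hfix : b (((w * b) ^ l) s₁) = ((w * b) ^ l) s₁ := by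
        rw [FR_conj_apply hb.1 hw.1, ← h3, FR_zpow_apply_zpow,
          show -l + (j + i) = l by omega]
      exact FR_pairing_ne hb (hmemSz l hs₁) hfix
    · have hfix : w (((w * b) ^ (l + 1)) s₁) = ((w * b) ^ (l + 1)) s₁ := by
        rw [FR_w_conj_apply hb.1 hw.1, ← h3, FR_zpow_apply_zpow,
          show 1 - (l + 1) + (j + i) = l + 1 by omega]
      exact FR_pairing_ne hw (hmemSz (l + 1) hs₁) hfix
  -- non-degeneracy
  have hbs1 : b s₁ ≠ s₁ := FR_pairing_ne hb hs₁
  have hbs2 : b s₂ ≠ s₂ := FR_pairing_ne hb hs₂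
  have hws1 : w s₁ ≠ s₁ := FR_pairing_ne hw hs₁
  have hws2 : w s₂ ≠ s₂ := FR_pairing_ne hw hs₂
  have hbs12 : b s₁ ≠ s₂ := by
    intro h
    apply hnf j₀ 0
    rw [← hj₀, ← h]
    simp
  have hws12 : w s₁ ≠ s₂ := by
    intro h
    apply hnf j₀ (-1)
    have hx : b (((w * b) ^ (-1 : ℤ)) s₁) = ((w * b) ^ (1 : ℤ)) (b s₁) := by
      rw [FR_conj_apply hb.1 hw.1, neg_neg]
    rw [← hj₀, ← h, hx, zpow_one, Equiv.Perm.mul_apply, hb.1]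
  have hbs21 : b s₂ ≠ s₁ := fun h => hbs12 (by rw [← h, hb.1])
  have hws21 : w s₂ ≠ s₁ := fun h => hws12 (by rw [← h, hw.1])
  -- the period d
  have hex : ∃ n : ℕ, 0 < n ∧ ((w * b) ^ (n : ℤ)) s₁ = s₁ := by
    have key : ∀ u v : ℕ, u < v → ((w * b) ^ (u : ℤ)) s₁ = ((w * b) ^ (v : ℤ)) s₁ →
        ∃ n : ℕ, 0 < n ∧ ((w * b) ^ (n : ℤ)) s₁ = s₁ := by
      intro u v huv hf
      refine ⟨v - u, by omega, ?_⟩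
      have h2 : ((w * b) ^ (u : ℤ)) (((w * b) ^ ((v - u : ℕ) : ℤ)) s₁) =
          ((w * b) ^ (u : ℤ)) s₁ := by
        rw [FR_zpow_apply_zpow, show (u : ℤ) + ((v - u : ℕ) : ℤ) = (v : ℤ) by omega]
        exact hf.symm
      exact (Equiv.injective _) h2
    have hmaps : ∀ i ∈ Finset.range ((faceOf S b w s₁).card + 1),
        ((w * b) ^ (i : ℤ)) s₁ ∈ faceOf S b w s₁ := by
      intro i _
      exact Finset.mem_filter.2 ⟨hmemSz _ hs₁, Or.inr ⟨(i : ℤ), rfl⟩⟩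
    obtain ⟨x, _, y, _, hxy, hfx⟩ :=
      Finset.exists_ne_map_eq_of_card_lt_of_maps_to (by simp) hmaps
    rcases hxy.lt_or_gt with hlt | hlt
    · exact key x y hlt hfx
    · exact key y x hlt hfx.symm
  set d := Nat.find hex with hddef
  have hd0 : 0 < d := (Nat.find_spec hex).1
  have hdfix : ((w * b) ^ ((d : ℕ) : ℤ)) s₁ = s₁ := (Nat.find_spec hex).2
  have hfixz : ∀ z : ℤ, ((w * b) ^ z) s₁ = s₁ ↔ (d : ℤ) ∣ z := by
    intro z
    constructor
    · intro hz
      by_contra hdvd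
      have h0 : (0 : ℤ) ≤ z % d := Int.emod_nonneg z (by exact_mod_cast hd0.ne')
      have h1 : z % d < d := Int.emod_lt_of_pos z (by exact_mod_cast hd0)
      have hrem : ((w * b) ^ (z % (d : ℤ))) s₁ = s₁ := by
        have hk : z - z % d = (d : ℤ) * (z / d) := by
          linarith [Int.mul_ediv_add_emod z (d : ℤ)]
        have h2 : ((w * b) ^ (z % (d : ℤ))) s₁ =
            ((w * b) ^ (-((d : ℤ) * (z / d)))) (((w * b) ^ z) s₁) := by
          rw [FR_zpow_apply_zpow, show -((d : ℤ) * (z / d)) + z = z % d by linarith]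
        rw [h2, hz, show -((d : ℤ) * (z / d)) = (d : ℤ) * (-(z / d)) by ring, zpow_mul]
        exact FR_zpow_fix hdfix (-(z / d))
      have hne0 : z % d ≠ 0 := fun h => hdvd (Int.dvd_of_emod_eq_zero h)
      have hlt : (z % (d : ℤ)).toNat < d := by omega
      refine Nat.find_min hex hlt ⟨by omega, ?_⟩
      rw [Int.toNat_of_nonneg h0]
      exact hrem
    · rintro ⟨k, rfl⟩
      rw [zpow_mul]
      exact FR_zpow_fix hdfix k
  have hcong : ∀ i j : ℤ, (((w * b) ^ i) s₁ = ((w * b) ^ j) s₁) ↔ (d : ℤ) ∣ (i - j) := by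
    intro i j
    rw [← hfixz (i - j)]
    have h2 : ((w * b) ^ j) (((w * b) ^ (i - j)) s₁) = ((w * b) ^ i) s₁ := by
      rw [FR_zpow_apply_zpow, show j + (i - j) = i by ring]
    constructor
    · intro h
      have h3 : ((w * b) ^ j) (((w * b) ^ (i - j)) s₁) = ((w * b) ^ j) s₁ := by
        rw [h2, h]
      exact (Equiv.apply_eq_iff_eq _).1 h3
    · intro h
      rw [← h2, h]
  -- the position m of s₂
  have hmlt : j₀ % (d : ℤ) < d := Int.emod_lt_of_pos j₀ (by exact_mod_cast hd0)
  have hm0' : (0 : ℤ) ≤ j₀ % d := Int.emod_nonneg j₀ (by exact_mod_cast hd0.ne')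
  set m := (j₀ % (d : ℤ)).toNat with hmdef
  have hmz : (m : ℤ) = j₀ % d := Int.toNat_of_nonneg hm0'
  have hs₂m : s₂ = ((w * b) ^ ((m : ℕ) : ℤ)) s₁ := by
    rw [hj₀]
    refine (hcong j₀ (m : ℤ)).2 ?_
    rw [hmz]
    exact ⟨j₀ / d, by linarith [Int.mul_ediv_add_emod j₀ (d : ℤ)]⟩
  have hm0 : 0 < m := by
    rcases Nat.eq_zero_or_pos m with h | h
    · exfalso
      apply hne
      rw [hs₂m, h]
      simp
    · exact h
  have hmd : m < d := by omega
  -- the face F and its structure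
  set F := faceOf S b w s₁ with hFdef
  have hmemF : ∀ t, t ∈ F ↔ t ∈ S ∧ SameFace b w s₁ t := fun t => Finset.mem_filter
  have hs₁F : s₁ ∈ F := (hmemF s₁).2 ⟨hs₁, FR_sameFace_refl b w s₁⟩
  have hs₂F : s₂ ∈ F := (hmemF s₂).2 ⟨hs₂, Or.inr ⟨j₀, hj₀⟩⟩
  have hmemE : ∀ i : ℤ, ((w * b) ^ i) s₁ ∈ F :=
    fun i => (hmemF _).2 ⟨hmemSz i hs₁, Or.inr ⟨i, rfl⟩⟩
  have hmemO : ∀ i : ℤ, b (((w * b) ^ i) s₁) ∈ F := fun i => (hmemF _).2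
    ⟨FR_pairing_mem hb (hmemSz i hs₁),
      Or.inl (FR_evenPos_iff.2 ⟨-i, FR_conj_apply hb.1 hw.1 i s₁⟩)⟩
  have hview : ∀ t ∈ F, ∃ i : ℤ, t = ((w * b) ^ i) s₁ ∨ t = b (((w * b) ^ i) s₁) := by
    intro t ht
    rcases ((hmemF t).1 ht).2 with h | h
    · rw [FR_evenPos_iff] at h
      obtain ⟨i, hi⟩ := h
      refine ⟨-i, Or.inr ?_⟩
      rw [hi, FR_conj_apply hb.1 hw.1, neg_neg]
    · obtain ⟨i, hi⟩ := h
      exact ⟨i, Or.inl hi⟩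
  have hFclosedb : ∀ t ∈ F, b t ∈ F := by
    intro t ht
    obtain ⟨i, hi | hi⟩ := hview t ht
    · rw [hi]; exact hmemO i
    · rw [hi, hb.1]; exact hmemE i
  have hFclosedw : ∀ t ∈ F, w t ∈ F := by
    intro t ht
    obtain ⟨i, hi | hi⟩ := hview t ht
    · rw [hi, FR_w_conj_apply hb.1 hw.1]
      exact (hmemF _).2 ⟨hmemSz (1 - i) (FR_pairing_mem hb hs₁),
        Or.inl (FR_evenPos_iff.2 ⟨1 - i, rfl⟩)⟩
    · rw [hi]
      have h2 : ((w * b) ^ (i + 1)) s₁ = w (b (((w * b) ^ i) s₁)) := by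
        rw [FR_zpow_succ_apply, Equiv.Perm.mul_apply]
      rw [← h2]
      exact hmemE (i + 1)
  have hFS : F ⊆ S := Finset.filter_subset _ _
  -- the modified pairings
  have hbne : b s₂ ≠ b s₁ := fun h => hne (b.injective h).symm
  have hwne : w s₂ ≠ w s₁ := fun h => hne (w.injective h).symm
  have hb'app := FR_removeP_apply hb.1 hbs1 hbs2 hne hbs12
  have hw'app := FR_removeP_apply hw.1 hws1 hws2 hne hws12
  have hb'inv := FR_removeP_invol hb.1 hbs1 hbs2 hne hbs12
  have hw'inv := FR_removeP_invol hw.1 hws1 hws2 hne hws12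
  have hb'3 : removeP b s₁ s₂ (b s₁) = b s₂ := by
    rw [hb'app, if_neg hbs1, if_neg hbs12, if_pos rfl]
  have hb'4 : removeP b s₁ s₂ (b s₂) = b s₁ := by
    rw [hb'app, if_neg hbs21, if_neg hbs2, if_neg hbne, if_pos rfl]
  have hb'gen : ∀ t, t ≠ s₁ → t ≠ s₂ → t ≠ b s₁ → t ≠ b s₂ →
      removeP b s₁ s₂ t = b t := by
    intro t e1 e2 e3 e4
    rw [hb'app, if_neg e1, if_neg e2, if_neg e3, if_neg e4]
  have hw'3 : removeP w s₁ s₂ (w s₁) = w s₂ := by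
    rw [hw'app, if_neg hws1, if_neg hws12, if_pos rfl]
  have hw'4 : removeP w s₁ s₂ (w s₂) = w s₁ := by
    rw [hw'app, if_neg hws21, if_neg hws2, if_neg hwne, if_pos rfl]
  have hw'gen : ∀ t, t ≠ s₁ → t ≠ s₂ → t ≠ w s₁ → t ≠ w s₂ →
      removeP w s₁ s₂ t = w t := by
    intro t e1 e2 e3 e4
    rw [hw'app, if_neg e1, if_neg e2, if_neg e3, if_neg e4]
  -- the reduced face F'
  set F' := F \ {s₁, s₂} with hF'def
  have hmemF' : ∀ t, t ∈ F' ↔ t ∈ F ∧ t ≠ s₁ ∧ t ≠ s₂ := by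
    intro t
    simp only [hF'def, Finset.mem_sdiff, Finset.mem_insert, Finset.mem_singleton,
      not_or]
  have hbs₁F' : b s₁ ∈ F' := (hmemF' _).2 ⟨hFclosedb s₁ hs₁F, hbs1, hbs12⟩
  have hbs₂F' : b s₂ ∈ F' := (hmemF' _).2 ⟨hFclosedb s₂ hs₂F, hbs21, hbs2⟩
  have hws₁F' : w s₁ ∈ F' := (hmemF' _).2 ⟨hFclosedw s₁ hs₁F, hws1, hws12⟩
  have hws₂F' : w s₂ ∈ F' := (hmemF' _).2 ⟨hFclosedw s₂ hs₂F, hws21, hws2⟩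
  have hF'closedb' : ∀ t, t ∈ F' → removeP b s₁ s₂ t ∈ F' := by
    intro t ht
    obtain ⟨htF, ht1, ht2⟩ := (hmemF' t).1 ht
    by_cases e3 : t = b s₁
    · rw [e3, hb'3]; exact hbs₂F'
    by_cases e4 : t = b s₂
    · rw [e4, hb'4]; exact hbs₁F'
    rw [hb'gen t ht1 ht2 e3 e4]
    refine (hmemF' _).2 ⟨hFclosedb t htF, ?_, ?_⟩
    · intro h; exact e3 (by rw [← hb.1 t, h])
    · intro h; exact e4 (by rw [← hb.1 t, h])
  have hF'closedw' : ∀ t, t ∈ F' → removeP w s₁ s₂ t ∈ F' := by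
    intro t ht
    obtain ⟨htF, ht1, ht2⟩ := (hmemF' t).1 ht
    by_cases e3 : t = w s₁
    · rw [e3, hw'3]; exact hws₂F'
    by_cases e4 : t = w s₂
    · rw [e4, hw'4]; exact hws₁F'
    rw [hw'gen t ht1 ht2 e3 e4]
    refine (hmemF' _).2 ⟨hFclosedw t htF, ?_, ?_⟩
    · intro h; exact e3 (by rw [← hw.1 t, h])
    · intro h; exact e4 (by rw [← hw.1 t, h])
  have hF'S' : ∀ t, t ∈ F' → t ∈ S \ {s₁, s₂} := by
    intro t ht
    obtain ⟨htF, h1, h2⟩ := (hmemF' t).1 ht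
    rw [Finset.mem_sdiff]
    simp only [Finset.mem_insert, Finset.mem_singleton, not_or]
    exact ⟨hFS htF, h1, h2⟩
  -- transfer outside F
  have hAb : ∀ x, x ∉ F → b x ∉ F := by
    intro x hx hbx
    exact hx (by rw [← hb.1 x]; exact hFclosedb _ hbx)
  have hAw : ∀ x, x ∉ F → w x ∉ F := by
    intro x hx hwx
    exact hx (by rw [← hw.1 x]; exact hFclosedw _ hwx)
  have heqb : ∀ x, x ∉ F → removeP b s₁ s₂ x = b x := by
    intro x hx
    have e1 : x ≠ s₁ := fun h => hx (by rw [h]; exact hs₁F)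
    have e2 : x ≠ s₂ := fun h => hx (by rw [h]; exact hs₂F)
    have e3 : x ≠ b s₁ := fun h => hx (by rw [h]; exact hFclosedb s₁ hs₁F)
    have e4 : x ≠ b s₂ := fun h => hx (by rw [h]; exact hFclosedb s₂ hs₂F)
    exact hb'gen x e1 e2 e3 e4
  have heqw : ∀ x, x ∉ F → removeP w s₁ s₂ x = w x := by
    intro x hx
    have e1 : x ≠ s₁ := fun h => hx (by rw [h]; exact hs₁F)
    have e2 : x ≠ s₂ := fun h => hx (by rw [h]; exact hs₂F)
    have e3 : x ≠ w s₁ := fun h => hx (by rw [h]; exact hFclosedw s₁ hs₁F)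
    have e4 : x ≠ w s₂ := fun h => hx (by rw [h]; exact hFclosedw s₂ hs₂F)
    exact hw'gen x e1 e2 e3 e4
  have houtface : ∀ t, t ∈ S → t ∉ F →
      faceOf (S \ {s₁, s₂}) (removeP b s₁ s₂) (removeP w s₁ s₂) t = faceOf S b w t := by
    intro t htS htF
    have hiff := FR_sameFace_agree hb.1 hw.1 hb'inv hw'inv (fun x => x ∉ F)
      hAb hAw heqb heqw htF
    ext u
    simp only [faceOf, Finset.mem_filter, Finset.mem_sdiff, Finset.mem_insert,
      Finset.mem_singleton, not_or]
    constructor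
    · rintro ⟨⟨huS, _⟩, hsf⟩
      exact ⟨huS, (hiff u).1 hsf⟩
    · rintro ⟨huS, hsf⟩
      have huF : u ∉ F := by
        intro huF
        apply htF
        have h1 : SameFace b w s₁ u := ((hmemF u).1 huF).2
        have h2 : SameFace b w s₁ t :=
          FR_sameFace_trans hb.1 hw.1 h1 (FR_sameFace_symm hb.1 hw.1 hsf)
        exact (hmemF t).2 ⟨htS, h2⟩
      refine ⟨⟨huS, ?_, ?_⟩, (hiff u).2 hsf⟩
      · intro h; exact huF (by rw [h]; exact hs₁F)
      · intro h; exact huF (by rw [h]; exact hs₂F)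
  -- the new face F'
  have hndvd : ∀ z : ℤ, -(d : ℤ) < z → z < d → z ≠ 0 → ¬ (d : ℤ) ∣ z :=
    fun z hz1 hz2 hz3 hdvd => hz3 (FR_dvd_small hdvd hz1 hz2)
  have stepA : ∀ i : ℤ, ¬ (d : ℤ) ∣ i → ¬ (d : ℤ) ∣ (i - m) →
      removeP b s₁ s₂ (((w * b) ^ i) s₁) = b (((w * b) ^ i) s₁) := by
    intro i hdi hdim
    refine hb'gen _ ?_ ?_ ?_ ?_
    · intro h
      exact hdi ((hfixz i).1 h)
    · intro h
      exact hdim ((hcong i (m : ℤ)).1 (by rw [h, hs₂m]))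
    · intro h
      exact hnf i 0 (by rw [h]; simp)
    · intro h
      exact hnf i (m : ℤ) (by rw [h, hs₂m])
  have hwS1 : w s₁ = b (((w * b) ^ (-1 : ℤ)) s₁) := by
    rw [FR_conj_apply hb.1 hw.1, neg_neg, zpow_one, Equiv.Perm.mul_apply, hb.1]
  have hwS2 : w s₂ = b (((w * b) ^ ((m : ℤ) - 1)) s₁) := by
    rw [FR_conj_apply hb.1 hw.1, hs₂m, FR_w_conj_apply hb.1 hw.1,
      show -((m : ℤ) - 1) = 1 - (m : ℤ) by ring]
  have stepW : ∀ i : ℤ, ¬ (d : ℤ) ∣ (i + 1) → ¬ (d : ℤ) ∣ (i + 1 - m) →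
      removeP w s₁ s₂ (b (((w * b) ^ i) s₁)) = ((w * b) ^ (i + 1)) s₁ := by
    intro i h1 h2
    have hg : removeP w s₁ s₂ (b (((w * b) ^ i) s₁)) = w (b (((w * b) ^ i) s₁)) := by
      refine hw'gen _ ?_ ?_ ?_ ?_
      · intro h
        exact hnf 0 i (by rw [h]; simp)
      · intro h
        exact hnf (m : ℤ) i (by rw [h, hs₂m])
      · intro h
        rw [hwS1] at h
        have h3 := b.injective h
        have h4 := (hcong i (-1)).1 h3
        exact h1 (by rw [show i + 1 = i - (-1) by ring]; exact h4)
      · intro h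
        rw [hwS2] at h
        have h3 := b.injective h
        have h4 := (hcong i ((m : ℤ) - 1)).1 h3
        exact h2 (by rw [show i + 1 - (m : ℤ) = i - ((m : ℤ) - 1) by ring]; exact h4)
    rw [hg, FR_zpow_succ_apply, Equiv.Perm.mul_apply]
  have linkO : ∀ i : ℕ, 0 < i → i < d → i ≠ m →
      SameFace (removeP b s₁ s₂) (removeP w s₁ s₂)
        (b (((w * b) ^ ((i : ℤ) - 1)) s₁)) (b (((w * b) ^ (i : ℤ)) s₁)) := by
    intro i h0 h1 h2
    have c1 : ¬ (d : ℤ) ∣ ((i : ℤ) - 1 + 1) := by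
      rw [show (i : ℤ) - 1 + 1 = (i : ℤ) by ring]
      exact hndvd _ (by omega) (by omega) (by omega)
    have c2 : ¬ (d : ℤ) ∣ ((i : ℤ) - 1 + 1 - m) := by
      rw [show (i : ℤ) - 1 + 1 - (m : ℤ) = (i : ℤ) - (m : ℤ) by ring]
      exact hndvd _ (by omega) (by omega) (by omega)
    have e1 := stepW ((i : ℤ) - 1) c1 c2
    rw [show (i : ℤ) - 1 + 1 = (i : ℤ) by ring] at e1
    have hx : SameFace (removeP b s₁ s₂) (removeP w s₁ s₂)
        (b (((w * b) ^ ((i : ℤ) - 1)) s₁)) (((w * b) ^ (i : ℤ)) s₁) := by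
      rw [← e1]
      exact FR_sameFace_apply_w hb'inv _
    have c1' : ¬ (d : ℤ) ∣ (i : ℤ) := hndvd _ (by omega) (by omega) (by omega)
    have c2' : ¬ (d : ℤ) ∣ ((i : ℤ) - m) := hndvd _ (by omega) (by omega) (by omega)
    have e2 := stepA (i : ℤ) c1' c2'
    have hy : SameFace (removeP b s₁ s₂) (removeP w s₁ s₂)
        (((w * b) ^ (i : ℤ)) s₁) (b (((w * b) ^ (i : ℤ)) s₁)) := by
      rw [← e2]
      exact FR_sameFace_apply_b _ _ _
    exact FR_sameFace_trans hb'inv hw'inv hx hy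
  have CO : ∀ i : ℕ, i < d →
      SameFace (removeP b s₁ s₂) (removeP w s₁ s₂) (b s₁) (b (((w * b) ^ (i : ℤ)) s₁)) := by
    intro i
    induction i using Nat.strong_induction_on with
    | _ i ih =>
      intro hid
      by_cases hi0 : i = 0
      · rw [hi0]
        have hz : ((w * b) ^ ((0 : ℕ) : ℤ)) s₁ = s₁ := by simp
        rw [hz]
        exact FR_sameFace_refl _ _ _
      by_cases him : i = m
      · rw [him, ← hs₂m]
        have h1 : SameFace (removeP b s₁ s₂) (removeP w s₁ s₂) (b s₁)
            (removeP b s₁ s₂ (b s₁)) := FR_sameFace_apply_b _ _ _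
        rw [hb'3] at h1
        exact h1
      · have h0 : 0 < i := Nat.pos_of_ne_zero hi0
        have ihh := ih (i - 1) (by omega) (by omega)
        have hlink := linkO i h0 hid him
        rw [show ((i - 1 : ℕ) : ℤ) = (i : ℤ) - 1 by omega] at ihh
        exact FR_sameFace_trans hb'inv hw'inv ihh hlink
  have hub : ∀ u, u ∈ F' →
      SameFace (removeP b s₁ s₂) (removeP w s₁ s₂) (b s₁) u := by
    intro u hu
    obtain ⟨huF, hu1, hu2⟩ := (hmemF' u).1 hu
    obtain ⟨i, hi | hi⟩ := hview u huF
    · set k := (i % (d : ℤ)).toNat with hkdef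
      have hk0 : (0 : ℤ) ≤ i % d := Int.emod_nonneg i (by exact_mod_cast hd0.ne')
      have hkd : i % (d : ℤ) < d := Int.emod_lt_of_pos i (by exact_mod_cast hd0)
      have hkz : (k : ℤ) = i % d := Int.toNat_of_nonneg hk0
      have hik : ((w * b) ^ i) s₁ = ((w * b) ^ ((k : ℕ) : ℤ)) s₁ := by
        refine (hcong i ((k : ℕ) : ℤ)).2 ?_
        rw [hkz]
        exact ⟨i / d, by linarith [Int.mul_ediv_add_emod i (d : ℤ)]⟩
      have hkne0 : k ≠ 0 := by
        intro h
        apply hu1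
        rw [hi, hik, h]
        simp
      have hknem : k ≠ m := by
        intro h
        apply hu2
        rw [hi, hik, h, ← hs₂m]
      have hkd' : k < d := by omega
      have h1 := CO k hkd'
      have c1 : ¬ (d : ℤ) ∣ ((k : ℕ) : ℤ) := hndvd _ (by omega) (by omega) (by omega)
      have c2 : ¬ (d : ℤ) ∣ (((k : ℕ) : ℤ) - m) := hndvd _ (by omega) (by omega) (by omega)
      have e2 := stepA ((k : ℕ) : ℤ) c1 c2
      have h2 : SameFace (removeP b s₁ s₂) (removeP w s₁ s₂)
          (((w * b) ^ ((k : ℕ) : ℤ)) s₁) (b (((w * b) ^ ((k : ℕ) : ℤ)) s₁)) := by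
        rw [← e2]
        exact FR_sameFace_apply_b _ _ _
      have h3 := FR_sameFace_trans hb'inv hw'inv h1 (FR_sameFace_symm hb'inv hw'inv h2)
      rw [hi, hik]
      exact h3
    · set k := (i % (d : ℤ)).toNat with hkdef
      have hk0 : (0 : ℤ) ≤ i % d := Int.emod_nonneg i (by exact_mod_cast hd0.ne')
      have hkd : i % (d : ℤ) < d := Int.emod_lt_of_pos i (by exact_mod_cast hd0)
      have hkz : (k : ℤ) = i % d := Int.toNat_of_nonneg hk0
      have hik : ((w * b) ^ i) s₁ = ((w * b) ^ ((k : ℕ) : ℤ)) s₁ := by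
        refine (hcong i ((k : ℕ) : ℤ)).2 ?_
        rw [hkz]
        exact ⟨i / d, by linarith [Int.mul_ediv_add_emod i (d : ℤ)]⟩
      have hkd' : k < d := by omega
      rw [hi, hik]
      exact CO k hkd'
  have hinface : ∀ t, t ∈ F' →
      faceOf (S \ {s₁, s₂}) (removeP b s₁ s₂) (removeP w s₁ s₂) t = F' := by
    intro t ht
    ext u
    simp only [faceOf, Finset.mem_filter]
    constructor
    · rintro ⟨_, hsf⟩
      rcases hsf with ⟨jj, hjj⟩ | ⟨jj, hjj⟩
      · rw [Equiv.Perm.mul_apply] at hjj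
        have hb't : removeP b s₁ s₂ t ∈ F' := hF'closedb' t ht
        rw [hjj]
        exact FR_orbit_closure hb'inv hw'inv (· ∈ F') hF'closedb' hF'closedw' hb't jj
      · rw [hjj]
        exact FR_orbit_closure hb'inv hw'inv (· ∈ F') hF'closedb' hF'closedw' ht jj
    · intro hu
      refine ⟨hF'S' u hu, ?_⟩
      exact FR_sameFace_trans hb'inv hw'inv
        (FR_sameFace_symm hb'inv hw'inv (hub t ht)) (hub u hu)
  have hfaceF : ∀ t, t ∈ F → faceOf S b w t = F := by
    intro t ht
    have hsf : SameFace b w s₁ t := ((hmemF t).1 ht).2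
    ext u
    simp only [faceOf, Finset.mem_filter]
    constructor
    · rintro ⟨h1, h2⟩
      exact (hmemF u).2 ⟨h1, FR_sameFace_trans hb.1 hw.1 hsf h2⟩
    · intro h
      obtain ⟨h1, h2⟩ := (hmemF u).1 h
      exact ⟨h1, FR_sameFace_trans hb.1 hw.1 (FR_sameFace_symm hb.1 hw.1 hsf) h2⟩
  constructor
  · -- cardinality
    have hsub : ({s₁, s₂} : Finset α) ⊆ F := by
      intro x hx
      rcases Finset.mem_insert.1 hx with rfl | hx
      · exact hs₁F
      · rw [Finset.mem_singleton] at hx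
        rw [hx]
        exact hs₂F
    have h2le : 2 ≤ F.card := by
      rw [← Finset.card_pair hne]
      exact Finset.card_le_card hsub
    have hcs : F'.card = F.card - 2 := by
      rw [hF'def, Finset.card_sdiff_of_subset hsub, Finset.card_pair hne]
    omega
  · -- the faces
    ext G
    simp only [faces, Finset.mem_image, Finset.mem_union, Finset.mem_erase,
      Finset.mem_singleton]
    constructor
    · rintro ⟨t, htS', rfl⟩
      have htS : t ∈ S := (Finset.mem_sdiff.1 htS').1
      have htns := (Finset.mem_sdiff.1 htS').2
      simp only [Finset.mem_insert, Finset.mem_singleton, not_or] at htns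
      by_cases htF : t ∈ F
      · right
        exact hinface t ((hmemF' t).2 ⟨htF, htns.1, htns.2⟩)
      · left
        refine ⟨?_, ⟨t, htS, (houtface t htS htF).symm⟩⟩
        rw [houtface t htS htF]
        intro h
        apply htF
        rw [← h]
        exact Finset.mem_filter.2 ⟨htS, FR_sameFace_refl _ _ _⟩
    · rintro (⟨hGne, t, htS, rfl⟩ | rfl)
      · have htF : t ∉ F := fun htF => hGne (hfaceF t htF)
        refine ⟨t, ?_, houtface t htS htF⟩
        rw [Finset.mem_sdiff]
        simp only [Finset.mem_insert, Finset.mem_singleton, not_or]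
        refine ⟨htS, ?_, ?_⟩
        · intro h; exact htF (by rw [h]; exact hs₁F)
        · intro h; exact htF (by rw [h]; exact hs₂F)
      · exact ⟨b s₁, hF'S' _ hbs₁F', hinface _ hbs₁F'⟩

end
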